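/- Let q be a prime power, F_q the finite field with q elements, and α a nonzero element of F_q. The number of invertible 3×3 matrices B over F_q whose (1,1) entry equals α and whose (2,2) entry equals -α is q·q^2·(q^3-q^2) + q(q-1)(q^2-1)(q^3-q^2); in particular this count is the same for every nonzero α. -/

import Mathlib

noncomputable section

open Matrix Submodule Set Fintype

namespace CardGL3Aux

attribute [local instance] Fintype.ofFinite

variable {F : Type*} [Field F] [Fintype F] [DecidableEq F]

local notation "V3" => (Fin 3 → F)

/-- rows equivalence -/
def eGL (α : F) : {B : GL (Fin 3) F //
        (B : Matrix (Fin 3) (Fin 3) F) 0 0 = α ∧ (B : Matrix (Fin 3) (Fin 3) F) 1 1 = -α} ≃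
    {s : Fin 3 → V3 // LinearIndependent F s ∧ s 0 0 = α ∧ s 1 1 = -α} where
  toFun B := ⟨fun i => (B.1 : Matrix (Fin 3) (Fin 3) F) i,
    Matrix.linearIndependent_rows_iff_isUnit.2 B.1.isUnit, B.2.1, B.2.2⟩
  invFun s := ⟨(Matrix.linearIndependent_rows_iff_isUnit.1 s.2.1).unit,
    by
      refine ⟨?_, ?_⟩ <;>
      · show ((Matrix.linearIndependent_rows_iff_isUnit.1 s.2.1).unit : Matrix (Fin 3) (Fin 3) F) _ _ = _
        first | exact s.2.2.1 | exact s.2.2.2⟩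
  left_inv B := by
    apply Subtype.ext; apply Units.ext
    simp
  right_inv s := by
    apply Subtype.ext
    rfl


def eSigma (α : F) : {s : Fin 3 → V3 // LinearIndependent F s ∧ s 0 0 = α ∧ s 1 1 = -α} ≃
    Σ p : {v : Fin 2 → V3 // LinearIndependent F v ∧ v 0 0 = α ∧ v 1 1 = -α},
      ((Submodule.span F (Set.range p.val) : Set V3)ᶜ : Set V3) where
  toFun s := ⟨⟨Fin.init s.1, (linearIndependent_fin_succ'.1 s.2.1).1,
      by simpa [Fin.init] using s.2.2.1, by simpa [Fin.init] using s.2.2.2⟩,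
    ⟨s.1 (Fin.last 2), (linearIndependent_fin_succ'.1 s.2.1).2⟩⟩
  invFun p := ⟨Fin.snoc p.1.1 p.2.1, linearIndependent_fin_snoc.2 ⟨p.1.2.1, p.2.2⟩,
    by simpa [Fin.snoc] using p.1.2.2.1, by simpa [Fin.snoc] using p.1.2.2.2⟩
  left_inv s := Subtype.ext (Fin.snoc_init_self s.1)
  right_inv p := by
    rcases p with ⟨⟨v, hv⟩, ⟨c, hc⟩⟩
    simp only [Sigma.mk.inj_iff, Subtype.mk.injEq, Fin.init_snoc, Fin.snoc_last, heq_eq_eq,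
      and_self, Subtype.coe_eta]
    constructor
    · exact trivial
    · exact (Subtype.heq_iff_coe_eq (fun x => by simp [Fin.init_snoc])).2 rfl

theorem fiber_card (v : Fin 2 → V3) (hv : LinearIndependent F v) :
    Fintype.card (((Submodule.span F (Set.range v) : Set V3)ᶜ : Set V3)) =
      Fintype.card F ^ 3 - Fintype.card F ^ 2 := by
  rw [card_compl_set,
    Module.card_eq_pow_finrank (K := F) (V := ((Submodule.span F (Set.range v)) : Set V3))]
  simp only [SetLike.coe_sort_coe, finrank_span_eq_card hv, Fintype.card_fin]
  rw [Module.card_eq_pow_finrank (K := F) (V := (Fin 3 → F))]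
  simp [Module.finrank_fintype_fun_eq_card]


def ePair0 (α : F) : {w : V3 // w 0 = α} ≃ F × F where
  toFun w := (w.1 1, w.1 2)
  invFun p := ⟨![α, p.1, p.2], rfl⟩
  left_inv w := Subtype.ext (by
    funext i; fin_cases i
    · exact w.2.symm
    · rfl
    · rfl)
  right_inv p := rfl

def ePair1 (α : F) : {w : V3 // w 1 = -α} ≃ F × F where
  toFun w := (w.1 0, w.1 2)
  invFun p := ⟨![p.1, -α, p.2], rfl⟩
  left_inv w := Subtype.ext (by
    funext i; fin_cases i
    · rfl
    · exact w.2.symm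
    · rfl)
  right_inv p := rfl

def eBase (α : F) : {v : Fin 2 → V3 // v 0 0 = α ∧ v 1 1 = -α} ≃
    {w : V3 // w 0 = α} × {w : V3 // w 1 = -α} :=
  ((Equiv.subtypeEquiv (piFinTwoEquiv fun _ => V3) (fun v => by simp [piFinTwoEquiv])).trans
    (Equiv.subtypeProdEquivProd))

theorem card_base (α : F) :
    Fintype.card {v : Fin 2 → V3 // v 0 0 = α ∧ v 1 1 = -α} = Fintype.card F ^ 4 := by
  rw [Fintype.card_congr (eBase α), Fintype.card_prod, Fintype.card_congr (ePair0 α),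
    Fintype.card_congr (ePair1 α), Fintype.card_prod]
  ring

def eDep (α : F) (hα : α ≠ 0) :
    {v : Fin 2 → V3 // (v 0 0 = α ∧ v 1 1 = -α) ∧ ∃ a : F, a • v 1 = v 0} ≃
      {y : V3 // y 1 = -α ∧ y 0 ≠ 0} where
  toFun v := ⟨v.1 1, v.2.1.2, by
    obtain ⟨a, ha⟩ := v.2.2
    intro h0
    have h := congrFun ha 0
    rw [Pi.smul_apply, smul_eq_mul, h0, mul_zero, v.2.1.1] at h
    exact hα h.symm⟩
  invFun y := ⟨![(α * (y.1 0)⁻¹) • y.1, y.1],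
    ⟨by
      show (α * (y.1 0)⁻¹) * (y.1 0) = α
      exact inv_mul_cancel_right₀ y.2.2 α, y.2.1⟩, ⟨α * (y.1 0)⁻¹, rfl⟩⟩
  left_inv v := Subtype.ext (by
    obtain ⟨a, ha⟩ := v.2.2
    have h0 : v.1 1 0 ≠ 0 := by
      intro h0
      have h := congrFun ha 0
      rw [Pi.smul_apply, smul_eq_mul, h0, mul_zero, v.2.1.1] at h
      exact hα h.symm
    have haval : a * v.1 1 0 = α := by
      have h := congrFun ha 0
      rwa [Pi.smul_apply, smul_eq_mul, v.2.1.1] at h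
    have haeq : α * (v.1 1 0)⁻¹ = a := by rw [mul_inv_eq_iff_eq_mul₀ h0]; exact haval.symm
    funext i; fin_cases i
    · show (α * (v.1 1 0)⁻¹) • v.1 1 = v.1 0
      rw [haeq, ha]
    · rfl)
  right_inv y := rfl

def eNE (α : F) : {y : V3 // y 1 = -α ∧ y 0 ≠ 0} ≃ {t : F // t ≠ 0} × F where
  toFun y := (⟨y.1 0, y.2.2⟩, y.1 2)
  invFun t := ⟨![t.1.1, -α, t.2], rfl, t.1.2⟩
  left_inv y := Subtype.ext (by
    funext i; fin_cases i
    · rfl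
    · exact y.2.1.symm
    · rfl)
  right_inv t := rfl

theorem card_dep (α : F) (hα : α ≠ 0) :
    Fintype.card {v : Fin 2 → V3 // (v 0 0 = α ∧ v 1 1 = -α) ∧ ∃ a : F, a • v 1 = v 0} =
      (Fintype.card F - 1) * Fintype.card F := by
  rw [Fintype.card_congr ((eDep α hα).trans (eNE α)), Fintype.card_prod]
  congr 1
  simp [Fintype.card_subtype_compl]


theorem card_pairs (α : F) (hα : α ≠ 0) :
    Fintype.card {v : Fin 2 → V3 // LinearIndependent F v ∧ v 0 0 = α ∧ v 1 1 = -α} =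
      Fintype.card F ^ 4 - (Fintype.card F - 1) * Fintype.card F := by
  have hiff : ∀ v : Fin 2 → V3,
      (LinearIndependent F v ∧ v 0 0 = α ∧ v 1 1 = -α) ↔
        ((v 0 0 = α ∧ v 1 1 = -α) ∧ ¬ ∃ a : F, a • v 1 = v 0) := by
    intro v
    rw [linearIndependent_fin2]
    constructor
    · rintro ⟨⟨h1, h2⟩, hc⟩
      exact ⟨hc, fun ⟨a, ha⟩ => h2 a ha⟩
    · rintro ⟨hc, hq⟩
      refine ⟨⟨?_, fun a ha => hq ⟨a, ha⟩⟩, hc⟩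
      intro h
      apply hα
      have h2 := hc.2
      rw [h] at h2
      simpa using h2.symm
  have e1 : {v : Fin 2 → V3 // LinearIndependent F v ∧ v 0 0 = α ∧ v 1 1 = -α} ≃
      {x : {v : Fin 2 → V3 // v 0 0 = α ∧ v 1 1 = -α} //
        ¬ ∃ a : F, a • (x.1) 1 = (x.1) 0} :=
    (Equiv.subtypeEquivRight hiff).trans
      (Equiv.subtypeSubtypeEquivSubtypeInter
        (fun v : Fin 2 → V3 => v 0 0 = α ∧ v 1 1 = -α)
        (fun v => ¬ ∃ a : F, a • v 1 = v 0)).symm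
  rw [Fintype.card_congr e1, Fintype.card_subtype_compl, card_base α]
  congr 1
  rw [Fintype.card_congr (Equiv.subtypeSubtypeEquivSubtypeInter
    (fun v : Fin 2 → V3 => v 0 0 = α ∧ v 1 1 = -α)
    (fun v => ∃ a : F, a • v 1 = v 0))]
  exact card_dep α hα

theorem card_rows (α : F) (hα : α ≠ 0) :
    Nat.card {s : Fin 3 → V3 // LinearIndependent F s ∧ s 0 0 = α ∧ s 1 1 = -α} =
      (Fintype.card F ^ 4 - (Fintype.card F - 1) * Fintype.card F) *
        (Fintype.card F ^ 3 - Fintype.card F ^ 2) := by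
  rw [Nat.card_eq_fintype_card, Fintype.card_congr (eSigma α), Fintype.card_sigma]
  have key : ∀ p : {v : Fin 2 → V3 // LinearIndependent F v ∧ v 0 0 = α ∧ v 1 1 = -α},
      Fintype.card ((Submodule.span F (Set.range p.val) : Set V3)ᶜ : Set V3) =
        Fintype.card F ^ 3 - Fintype.card F ^ 2 := fun p => fiber_card p.1 p.2.1
  rw [Finset.sum_congr rfl (fun p _ => key p), Finset.sum_const, Finset.card_univ,
    smul_eq_mul, card_pairs α hα]

end CardGL3Aux

/-- For any nonzero `α ∈ F_q`, the number of invertible 3×3 matrices over `F_q` with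
`(1,1)` entry `α` and `(2,2)` entry `-α` is
`q·q^2·(q^3-q^2) + q(q-1)(q^2-1)(q^3-q^2)`; in particular the count is the same for every
nonzero `α`. -/
theorem card_GL3_N_alpha_negalpha (q : ℕ) (F : Type*) [Field F] [Fintype F] [DecidableEq F]
    (hq : Fintype.card F = q) (α : F) (hα : α ≠ 0) :
    (Nat.card {B : GL (Fin 3) F //
        (B : Matrix (Fin 3) (Fin 3) F) 0 0 = α ∧ (B : Matrix (Fin 3) (Fin 3) F) 1 1 = -α} : ℤ) =
      (q : ℤ) * (q : ℤ) ^ 2 * ((q : ℤ) ^ 3 - q ^ 2)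
        + (q : ℤ) * ((q : ℤ) - 1) * ((q : ℤ) ^ 2 - 1) * ((q : ℤ) ^ 3 - q ^ 2) := by
  subst hq
  rw [Nat.card_congr (CardGL3Aux.eGL α), CardGL3Aux.card_rows α hα]
  have h3 : 1 ≤ Fintype.card F := Fintype.card_pos
  have h1 : (Fintype.card F - 1) * Fintype.card F ≤ Fintype.card F ^ 4 := by
    calc (Fintype.card F - 1) * Fintype.card F ≤ Fintype.card F * Fintype.card F :=
          Nat.mul_le_mul_right _ (Nat.sub_le _ _)
      _ = Fintype.card F ^ 2 := (sq (Fintype.card F)).symm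
      _ ≤ Fintype.card F ^ 4 := Nat.pow_le_pow_right h3 (by norm_num)
  have h2 : Fintype.card F ^ 2 ≤ Fintype.card F ^ 3 := Nat.pow_le_pow_right h3 (by norm_num)
  push_cast [Nat.cast_sub h1, Nat.cast_sub h2, Nat.cast_sub h3]
  ring
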